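/- Let T[ρ] = Σ_k M_k ρ M_k† be a TPCP map on a finite-dimensional space H = H_S ⊕ H_R with M_{k,Q} = 0 for all k (H_S invariant). Then the set of density operators supported on H_S is globally asymptotically stable (invariant and attractive, i.e. Tr(Π_R T^t[ρ]) → 0 as t → ∞ for every density operator ρ) if and only if there is no density operator ρ fixed by T whose support is contained in ∩_k ker(M_{k,P}) ⊆ H_R. -/

import Mathlib

set_option linter.unusedSectionVars false
open Matrix Finset Filter
open scoped Topology
open scoped ComplexOrder

attribute [local instance] Matrix.normedAddCommGroup Matrix.normedSpace

namespace GASaux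

variable {n m : Type*} [Fintype n] [Fintype m] [DecidableEq n] [DecidableEq m]

open scoped MatrixOrder in
lemma posSemidef_iff_eq_transpose_mul_self {A : Matrix n n ℂ} :
    A.PosSemidef ↔ ∃ B : Matrix n n ℂ, A = Bᴴ * B := by
  constructor
  · intro h
    obtain ⟨B, rfl⟩ := CStarAlgebra.nonneg_iff_eq_star_mul_self.mp h.nonneg
    exact ⟨B, rfl⟩
  · rintro ⟨B, rfl⟩
    exact posSemidef_conjTranspose_mul_self B

lemma trace_fromBlocks (A : Matrix n n ℂ) (B : Matrix n m ℂ) (C : Matrix m n ℂ)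
    (D : Matrix m m ℂ) : (fromBlocks A B C D).trace = A.trace + D.trace := by
  simp [Matrix.trace, Fintype.sum_sum_type, fromBlocks, Matrix.diag]

lemma trace_real {A : Matrix n n ℂ} (hA : A.IsHermitian) :
    A.trace = (A.trace.re : ℂ) := by
  have h := congrArg Matrix.trace hA
  rw [trace_conjTranspose] at h
  exact (Complex.conj_eq_iff_re.mp h).symm

lemma trace_CTmul (B : Matrix n m ℂ) :
    (Bᴴ * B).trace = ((∑ j, ∑ i, Complex.normSq (B i j) : ℝ) : ℂ) := by
  push_cast
  simp only [Matrix.trace, Matrix.diag, Matrix.mul_apply, Matrix.conjTranspose_apply]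
  congr 1; ext j; congr 1; ext i
  rw [Complex.normSq_eq_conj_mul_self]; rfl

lemma trace_re_nonneg {A : Matrix n n ℂ} (hA : A.PosSemidef) : 0 ≤ A.trace.re := by
  obtain ⟨B, rfl⟩ := posSemidef_iff_eq_transpose_mul_self.mp hA
  rw [trace_CTmul]
  simp only [Complex.ofReal_re]
  exact Finset.sum_nonneg fun j _ => Finset.sum_nonneg fun i _ => Complex.normSq_nonneg _

lemma eq_zero_of_trace_eq_zero {A : Matrix n n ℂ} (hA : A.PosSemidef)
    (h : A.trace = 0) : A = 0 := by
  obtain ⟨B, rfl⟩ := posSemidef_iff_eq_transpose_mul_self.mp hA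
  rw [trace_CTmul] at h
  have h' : (∑ j, ∑ i, Complex.normSq (B i j)) = 0 := by exact_mod_cast h
  have hB : B = 0 := by
    ext i j
    have := (Finset.sum_eq_zero_iff_of_nonneg (fun j _ => Finset.sum_nonneg
      (fun i _ => Complex.normSq_nonneg _))).mp h' j (mem_univ _)
    have := (Finset.sum_eq_zero_iff_of_nonneg (fun i _ => Complex.normSq_nonneg _)).mp
      this i (mem_univ _)
    simpa using Complex.normSq_eq_zero.mp this
  simp [hB]


lemma diag_re_le_trace {A : Matrix n n ℂ} (hA : A.PosSemidef) (i : n) :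
    (A i i).re ≤ A.trace.re := by
  obtain ⟨B, rfl⟩ := posSemidef_iff_eq_transpose_mul_self.mp hA
  rw [trace_CTmul]
  have : ((Bᴴ * B) i i).re = ∑ k, Complex.normSq (B k i) := by
    simp only [Matrix.mul_apply, Matrix.conjTranspose_apply, Complex.re_sum]
    congr 1; ext k
    have hsq : star (B k i) * B k i = ((Complex.normSq (B k i) : ℝ) : ℂ) :=
      (Complex.normSq_eq_conj_mul_self (z := B k i)).symm
    rw [hsq, Complex.ofReal_re]
  rw [this, Complex.ofReal_re]
  exact Finset.single_le_sum (f := fun j => ∑ k, Complex.normSq (B k j))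
    (fun j _ => Finset.sum_nonneg fun k _ => Complex.normSq_nonneg _) (mem_univ i)

lemma entry_norm_le_trace {A : Matrix n n ℂ} (hA : A.PosSemidef) (i j : n) :
    ‖A i j‖ ≤ A.trace.re := by
  obtain ⟨B, hB⟩ := posSemidef_iff_eq_transpose_mul_self.mp hA
  have hij : A i j = ∑ k, (starRingEnd ℂ) (B k i) * B k j := by
    rw [hB]; simp [Matrix.mul_apply, Matrix.conjTranspose_apply]
  have h1 : ‖A i j‖ ≤ ∑ k, ‖B k i‖ * ‖B k j‖ := by
    rw [hij]
    refine (norm_sum_le _ _).trans (le_of_eq ?_)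
    congr 1; ext k; rw [norm_mul]; simp
  have h2 : ∀ k : n, ‖B k i‖ * ‖B k j‖ ≤ (Complex.normSq (B k i) + Complex.normSq (B k j)) / 2 := by
    intro k
    rw [Complex.normSq_eq_norm_sq, Complex.normSq_eq_norm_sq]
    nlinarith [sq_nonneg (‖B k i‖ - ‖B k j‖),
      norm_nonneg (B k i), norm_nonneg (B k j)]
  have h3 : ∑ k, ‖B k i‖ * ‖B k j‖ ≤
      ((∑ k, Complex.normSq (B k i)) + ∑ k, Complex.normSq (B k j)) / 2 := by
    rw [← Finset.sum_add_distrib, Finset.sum_div]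
    exact Finset.sum_le_sum fun k _ => h2 k
  have hdiag : ∀ l : n, ∑ k, Complex.normSq (B k l) = (A l l).re := by
    intro l
    rw [hB]
    simp only [Matrix.mul_apply, Matrix.conjTranspose_apply, Complex.re_sum]
    congr 1; ext k
    have hsq : star (B k l) * B k l = ((Complex.normSq (B k l) : ℝ) : ℂ) :=
      (Complex.normSq_eq_conj_mul_self (z := B k l)).symm
    rw [hsq, Complex.ofReal_re]
  have hi := diag_re_le_trace hA i
  have hj := diag_re_le_trace hA j
  calc ‖A i j‖ ≤ _ := h1
    _ ≤ _ := h3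
    _ ≤ (A.trace.re + A.trace.re) / 2 := by rw [hdiag i, hdiag j]; linarith
    _ = A.trace.re := by ring

lemma posSemidef_sum {ι : Type*} (s : Finset ι) (f : ι → Matrix n n ℂ)
    (hf : ∀ i ∈ s, (f i).PosSemidef) : (∑ i ∈ s, f i).PosSemidef :=
  Finset.sum_induction f _ (fun _ _ ha hb => ha.add hb) Matrix.PosSemidef.zero hf

lemma posSemidef_real_smul {A : Matrix n n ℂ} (hA : A.PosSemidef) {c : ℝ} (hc : 0 ≤ c) :
    (c • A).PosSemidef := by
  rw [posSemidef_iff_dotProduct_mulVec]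
  constructor
  · show (c • A)ᴴ = c • A
    ext i j
    simp only [Matrix.conjTranspose_apply, Matrix.smul_apply, star_smul, star_trivial]
    rw [← Matrix.conjTranspose_apply, hA.1]
  · intro x
    have h1 : (c • A) *ᵥ x = c • (A *ᵥ x) := by
      ext i
      simp only [Matrix.mulVec, dotProduct, Matrix.smul_apply, Pi.smul_apply,
        Complex.real_smul, Finset.mul_sum]
      exact Finset.sum_congr rfl fun k _ => by ring
    rw [h1]
    have h2 : star x ⬝ᵥ (c • (A *ᵥ x)) = c • (star x ⬝ᵥ (A *ᵥ x)) := by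
      simp only [dotProduct, Pi.smul_apply, Complex.real_smul, Finset.mul_sum]
      exact Finset.sum_congr rfl fun k _ => by ring
    rw [h2]
    have h0 := hA.dotProduct_mulVec_nonneg x
    rw [Complex.real_smul]
    rw [Complex.le_def] at h0 ⊢
    simp only [Complex.zero_re, Complex.zero_im, Complex.mul_re, Complex.mul_im,
      Complex.ofReal_re, Complex.ofReal_im] at h0 ⊢
    constructor
    · nlinarith [h0.1, h0.2]
    · rw [← h0.2]; ring

end GASaux

namespace GASaux

lemma cesaro_fixed {r K : ℕ} (R : Fin K → Matrix (Fin r) (Fin r) ℂ)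
    (hmono : ∀ X : Matrix (Fin r) (Fin r) ℂ, X.PosSemidef →
      ((∑ k, R k * X * (R k)ᴴ).trace).re ≤ X.trace.re)
    (X : Matrix (Fin r) (Fin r) ℂ) (hX : X.PosSemidef) (hX1 : X.trace.re ≤ 1)
    (hne : ¬ Tendsto (fun t : ℕ =>
      (((fun Z => ∑ k, R k * Z * (R k)ᴴ)^[t] X).trace).re) atTop (𝓝 0)) :
    ∃ Y : Matrix (Fin r) (Fin r) ℂ, Y.PosSemidef ∧ Y.trace = 1 ∧
      ∑ k, R k * Y * (R k)ᴴ = Y := by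
  set Ψ : Matrix (Fin r) (Fin r) ℂ → Matrix (Fin r) (Fin r) ℂ :=
    fun Z => ∑ k, R k * Z * (R k)ᴴ with hΨ
  have hpsd : ∀ t, (Ψ^[t] X).PosSemidef := by
    intro t
    induction t with
    | zero => simpa using hX
    | succ t ih =>
      rw [Function.iterate_succ_apply']
      exact posSemidef_sum _ _ fun k _ => ih.mul_mul_conjTranspose_same (R k)
  set b : ℕ → ℝ := fun t => ((Ψ^[t] X).trace).re with hb
  have hbstep : ∀ t, b (t+1) ≤ b t := by
    intro t
    have h2 : Ψ^[t+1] X = Ψ (Ψ^[t] X) := Function.iterate_succ_apply' Ψ t X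
    show ((Ψ^[t+1] X).trace).re ≤ ((Ψ^[t] X).trace).re
    rw [h2]
    exact hmono _ (hpsd t)
  have hanti : Antitone b := antitone_nat_of_succ_le hbstep
  have hbnonneg : ∀ t, 0 ≤ b t := fun t => trace_re_nonneg (hpsd t)
  have hb1 : ∀ t, b t ≤ 1 := fun t => le_trans (hanti (Nat.zero_le t)) (by simpa [hb] using hX1)
  set c : ℝ := ⨅ t, b t with hc
  have htendsto : Tendsto b atTop (𝓝 c) :=
    tendsto_atTop_ciInf hanti ⟨0, fun y ⟨t, ht⟩ => ht ▸ hbnonneg t⟩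
  have hc0 : 0 ≤ c := le_ciInf hbnonneg
  have hcne : c ≠ 0 := fun h => hne (h ▸ htendsto)
  have hnorm : ∀ t, ‖Ψ^[t] X‖ ≤ 1 :=
    fun t => (Matrix.norm_le_iff zero_le_one).mpr fun i j =>
      le_trans (entry_norm_le_trace (hpsd t) i j) (hb1 t)
  set A : ℕ → Matrix (Fin r) (Fin r) ℂ :=
    fun N => (N : ℝ)⁻¹ • ∑ t ∈ Finset.range N, Ψ^[t] X with hA
  have hAval : ∀ N, ‖A N‖ ≤ 1 := by
    intro N
    rcases Nat.eq_zero_or_pos N with h | h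
    · simp [hA, h]
    · rw [hA]
      simp only
      rw [norm_smul]
      calc ‖(N:ℝ)⁻¹‖ * ‖∑ t ∈ Finset.range N, Ψ^[t] X‖
          ≤ (N:ℝ)⁻¹ * ((N:ℝ) * 1) := by
            refine mul_le_mul ?_ ?_ (norm_nonneg _) (by positivity)
            · rw [norm_inv, Real.norm_natCast]
            · refine le_trans (norm_sum_le _ _) ?_
              calc ∑ t ∈ Finset.range N, ‖Ψ^[t] X‖ ≤ ∑ t ∈ Finset.range N, 1 :=
                    Finset.sum_le_sum fun t _ => hnorm t
                _ = (N:ℝ) * 1 := by simp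
        _ = 1 := by
            have : (N:ℝ) ≠ 0 := Nat.cast_ne_zero.mpr h.ne'
            field_simp
  have hApsd : ∀ N, (A N).PosSemidef :=
    fun N => posSemidef_real_smul (posSemidef_sum _ _ fun t _ => hpsd t)
      (by positivity)
  obtain ⟨Y, -, φ, hφ, hconv⟩ :=
    (isCompact_closedBall (0 : Matrix (Fin r) (Fin r) ℂ) 1).tendsto_subseq
      (fun N => mem_closedBall_zero_iff.mpr (hAval N))
  have hYpsd : Y.PosSemidef := by
    rw [posSemidef_iff_dotProduct_mulVec]
    constructor
    · have h1 : Tendsto (fun n => (A (φ n))ᴴ) atTop (𝓝 Yᴴ) :=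
        ((continuous_id.matrix_conjTranspose).tendsto Y).comp hconv
      have h2 : (fun n => (A (φ n))ᴴ) = fun n => A (φ n) :=
        funext fun n => (hApsd (φ n)).1
      rw [h2] at h1
      exact tendsto_nhds_unique h1 hconv
    · intro x
      have hcont : Continuous (fun Z : Matrix (Fin r) (Fin r) ℂ =>
          dotProduct (star x) (Z *ᵥ x)) :=
        continuous_const.dotProduct (continuous_id.matrix_mulVec continuous_const)
      have h1 : Tendsto (fun n => dotProduct (star x) ((A (φ n)) *ᵥ x)) atTop
          (𝓝 (dotProduct (star x) (Y *ᵥ x))) := (hcont.tendsto Y).comp hconv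
      have hterm : ∀ n, 0 ≤ dotProduct (star x) ((A (φ n)) *ᵥ x) :=
        fun n => (hApsd (φ n)).dotProduct_mulVec_nonneg x
      rw [Complex.le_def]
      constructor
      · have hre : Tendsto (fun n => (dotProduct (star x) ((A (φ n)) *ᵥ x)).re) atTop
            (𝓝 ((dotProduct (star x) (Y *ᵥ x)).re)) :=
          (Complex.continuous_re.tendsto _).comp h1
        simpa using ge_of_tendsto' hre fun n => ((Complex.le_def.mp (hterm n)).1 :)
      · have him : Tendsto (fun n => (dotProduct (star x) ((A (φ n)) *ᵥ x)).im) atTop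
            (𝓝 ((dotProduct (star x) (Y *ᵥ x)).im)) :=
          (Complex.continuous_im.tendsto _).comp h1
        have him0 : (fun n => (dotProduct (star x) ((A (φ n)) *ᵥ x)).im) = fun _ => (0:ℝ) :=
          funext fun n => ((Complex.le_def.mp (hterm n)).2).symm
        rw [him0] at him
        simpa using (tendsto_nhds_unique him tendsto_const_nhds).symm
  have htrA : ∀ N, (A N).trace = (((N:ℝ)⁻¹ * ∑ t ∈ Finset.range N, b t : ℝ) : ℂ) := by
    intro N
    rw [hA]
    simp only
    rw [Matrix.trace_smul, Matrix.trace_sum]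
    have hs : ∑ t ∈ Finset.range N, (Ψ^[t] X).trace
        = ((∑ t ∈ Finset.range N, b t : ℝ) : ℂ) := by
      rw [Complex.ofReal_sum]
      exact Finset.sum_congr rfl fun t _ => trace_real (hpsd t).1
    rw [hs, Complex.real_smul, Complex.ofReal_mul]
  have hcesaro : Tendsto (fun N : ℕ => (N:ℝ)⁻¹ * ∑ t ∈ Finset.range N, b t) atTop (𝓝 c) := by
    simpa [smul_eq_mul] using htendsto.cesaro
  have htrconv : Tendsto (fun N => (A N).trace) atTop (𝓝 (c : ℂ)) := by
    have h := (Complex.continuous_ofReal.tendsto c).comp hcesaro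
    have heq : (fun N => (A N).trace)
        = fun N : ℕ => (((N:ℝ)⁻¹ * ∑ t ∈ Finset.range N, b t : ℝ) : ℂ) := funext htrA
    rw [heq]
    exact h
  have htrY : Y.trace = (c : ℂ) := by
    have h1 : Tendsto (fun n => (A (φ n)).trace) atTop (𝓝 Y.trace) :=
      ((continuous_id.matrix_trace).tendsto Y).comp hconv
    have h2 : Tendsto (fun n => (A (φ n)).trace) atTop (𝓝 (c:ℂ)) :=
      htrconv.comp hφ.tendsto_atTop
    exact tendsto_nhds_unique h1 h2
  have hΨcont : Continuous Ψ := continuous_finset_sum _ fun k _ =>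
    ((continuous_const.matrix_mul continuous_id).matrix_mul continuous_const)
  have hsmulΨ : ∀ (a : ℝ) (W : Matrix (Fin r) (Fin r) ℂ), Ψ (a • W) = a • Ψ W := by
    intro a W
    show ∑ k, R k * (a • W) * (R k)ᴴ = a • ∑ k, R k * W * (R k)ᴴ
    rw [Finset.smul_sum]
    exact Finset.sum_congr rfl fun k _ => by rw [Matrix.mul_smul, Matrix.smul_mul]
  have hdiff : ∀ N, Ψ (A N) - A N = (N:ℝ)⁻¹ • (Ψ^[N] X - X) := by
    intro N
    have hΨsum : Ψ (∑ t ∈ Finset.range N, Ψ^[t] X) = ∑ t ∈ Finset.range N, Ψ (Ψ^[t] X) := by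
      show ∑ k, R k * (∑ t ∈ Finset.range N, Ψ^[t] X) * (R k)ᴴ = _
      simp only [Matrix.mul_sum, Matrix.sum_mul]
      exact Finset.sum_comm
    calc Ψ (A N) - A N
        = (N:ℝ)⁻¹ • (∑ t ∈ Finset.range N, Ψ (Ψ^[t] X))
          - (N:ℝ)⁻¹ • ∑ t ∈ Finset.range N, Ψ^[t] X := by
          rw [hA]; simp only; rw [hsmulΨ, hΨsum]
      _ = (N:ℝ)⁻¹ • (∑ t ∈ Finset.range N, (Ψ^[t+1] X - Ψ^[t] X)) := by
          rw [← smul_sub, Finset.sum_sub_distrib]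
          congr 2
          exact Finset.sum_congr rfl fun t _ => (Function.iterate_succ_apply' Ψ t X).symm
      _ = (N:ℝ)⁻¹ • (Ψ^[N] X - X) := by
          rw [Finset.sum_range_sub (fun t => Ψ^[t] X)]
          simp
  have hdiff0 : Tendsto (fun n => Ψ (A (φ n)) - A (φ n)) atTop (𝓝 0) := by
    have hb2 : ∀ N, ‖Ψ (A N) - A N‖ ≤ (N:ℝ)⁻¹ * 2 := by
      intro N
      rw [hdiff N, norm_smul, norm_inv, Real.norm_natCast]
      refine mul_le_mul_of_nonneg_left ?_ (by positivity)
      calc ‖Ψ^[N] X - X‖ ≤ ‖Ψ^[N] X‖ + ‖X‖ := norm_sub_le _ _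
        _ ≤ 1 + 1 := add_le_add (hnorm N) (by simpa using hnorm 0)
        _ = 2 := by norm_num
    have hlim : Tendsto (fun N : ℕ => (N:ℝ)⁻¹ * 2) atTop (𝓝 0) := by
      simpa using tendsto_inv_atTop_nhds_zero_nat.mul_const (2:ℝ)
    exact (squeeze_zero_norm hb2 hlim).comp hφ.tendsto_atTop
  have hΨY : Ψ Y = Y := by
    have h1 : Tendsto (fun n => Ψ (A (φ n)) - A (φ n)) atTop (𝓝 (Ψ Y - Y)) :=
      ((hΨcont.tendsto Y).comp hconv).sub hconv
    exact sub_eq_zero.mp (tendsto_nhds_unique h1 hdiff0)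
  have hcpos : 0 < c := lt_of_le_of_ne hc0 (Ne.symm hcne)
  refine ⟨c⁻¹ • Y, posSemidef_real_smul hYpsd (by positivity), ?_, ?_⟩
  · rw [Matrix.trace_smul, htrY, Complex.real_smul, ← Complex.ofReal_mul,
      inv_mul_cancel₀ hcne, Complex.ofReal_one]
  · have : ∑ k, R k * (c⁻¹ • Y) * (R k)ᴴ = c⁻¹ • Ψ Y := by
      rw [hΨ, Finset.smul_sum]
      exact Finset.sum_congr rfl fun k _ => by rw [Matrix.mul_smul, Matrix.smul_mul]
    rw [this, hΨY]

end GASaux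

namespace GASaux

variable {l o : Type*} [Fintype l] [Fintype o] [DecidableEq l] [DecidableEq o]

lemma toBlocks22_sum {ι : Type*} (s : Finset ι) (f : ι → Matrix (l ⊕ o) (l ⊕ o) ℂ) :
    (∑ k ∈ s, f k).toBlocks₂₂ = ∑ k ∈ s, (f k).toBlocks₂₂ := by
  ext i j
  simp [Matrix.toBlocks₂₂, Matrix.sum_apply]

lemma mul_mul_CT_block22 (N : Matrix (l ⊕ o) (l ⊕ o) ℂ) (hN : N.toBlocks₂₁ = 0)
    (σ : Matrix (l ⊕ o) (l ⊕ o) ℂ) :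
    (N * σ * Nᴴ).toBlocks₂₂ = N.toBlocks₂₂ * σ.toBlocks₂₂ * (N.toBlocks₂₂)ᴴ := by
  conv_lhs => rw [← fromBlocks_toBlocks N, ← fromBlocks_toBlocks σ, hN]
  rw [fromBlocks_conjTranspose, fromBlocks_multiply, fromBlocks_multiply]
  simp

lemma CTmul_block22 (N : Matrix (l ⊕ o) (l ⊕ o) ℂ) (hN : N.toBlocks₂₁ = 0) :
    (Nᴴ * N).toBlocks₂₂
      = (N.toBlocks₁₂)ᴴ * N.toBlocks₁₂ + (N.toBlocks₂₂)ᴴ * N.toBlocks₂₂ := by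
  conv_lhs => rw [← fromBlocks_toBlocks N, hN]
  rw [fromBlocks_conjTranspose, fromBlocks_multiply]
  simp

lemma trace_proj (σ : Matrix (l ⊕ o) (l ⊕ o) ℂ) :
    (fromBlocks (0 : Matrix l l ℂ) 0 0 (1 : Matrix o o ℂ) * σ).trace
      = (σ.toBlocks₂₂).trace := by
  conv_lhs => rw [← fromBlocks_toBlocks σ]
  rw [fromBlocks_multiply, trace_fromBlocks]
  simp

lemma sum_fromBlocks00 {ι : Type*} (s : Finset ι) (g : ι → Matrix o o ℂ) :
    ∑ k ∈ s, fromBlocks (0 : Matrix l l ℂ) 0 0 (g k)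
      = fromBlocks (0 : Matrix l l ℂ) 0 0 (∑ k ∈ s, g k) := by
  ext i j
  cases i <;> cases j <;> simp [Matrix.sum_apply, Matrix.fromBlocks]

lemma psd_fromBlocks00 {Y : Matrix o o ℂ} (hY : Y.PosSemidef) :
    (fromBlocks (0 : Matrix l l ℂ) 0 0 Y).PosSemidef := by
  obtain ⟨C, rfl⟩ := posSemidef_iff_eq_transpose_mul_self.mp hY
  refine posSemidef_iff_eq_transpose_mul_self.mpr
    ⟨fromBlocks (0 : Matrix l l ℂ) 0 0 C, ?_⟩
  rw [fromBlocks_conjTranspose, fromBlocks_multiply]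
  simp

end GASaux

open GASaux

/-- with `H_S` invariant, the states supported on `H_S` are GAS
iff there is no fixed density operator whose support is contained in
`∩_k ker(M_{k,P}) ⊆ H_R`. -/
theorem GAS_iff_no_fixed_state_in_kernels
    (m r K : ℕ)
    (M : Fin K → Matrix (Fin m ⊕ Fin r) (Fin m ⊕ Fin r) ℂ)
    (hTP : ∑ k, (M k)ᴴ * M k = 1)
    (hQ : ∀ k, (M k).toBlocks₂₁ = 0) :
    (∀ ρ : Matrix (Fin m ⊕ Fin r) (Fin m ⊕ Fin r) ℂ,
        ρ.PosSemidef → ρ.trace = 1 →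
        Tendsto
          (fun t : ℕ =>
            (Matrix.fromBlocks 0 0 0 (1 : Matrix (Fin r) (Fin r) ℂ) *
              ((fun σ => ∑ k, M k * σ * (M k)ᴴ)^[t] ρ)).trace)
          atTop (nhds 0)) ↔
    ¬ ∃ ρ : Matrix (Fin m ⊕ Fin r) (Fin m ⊕ Fin r) ℂ,
        ρ.PosSemidef ∧ ρ.trace = 1 ∧
        ρ.toBlocks₁₁ = 0 ∧ ρ.toBlocks₁₂ = 0 ∧ ρ.toBlocks₂₁ = 0 ∧
        (∀ k, (M k).toBlocks₁₂ * ρ.toBlocks₂₂ = 0) ∧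
        (∑ k, M k * ρ * (M k)ᴴ) = ρ := by
  set P : Fin K → Matrix (Fin m) (Fin r) ℂ := fun k => (M k).toBlocks₁₂ with hP
  set R : Fin K → Matrix (Fin r) (Fin r) ℂ := fun k => (M k).toBlocks₂₂ with hR
  -- the TP condition on the 2,2 block
  have hTP22 : ∑ k, ((P k)ᴴ * P k + (R k)ᴴ * R k) = (1 : Matrix (Fin r) (Fin r) ℂ) := by
    have h := congrArg Matrix.toBlocks₂₂ hTP
    rw [toBlocks22_sum] at h
    have h2 : ∀ k : Fin K, ((M k)ᴴ * M k).toBlocks₂₂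
        = (P k)ᴴ * P k + (R k)ᴴ * R k := fun k => CTmul_block22 (M k) (hQ k)
    rw [Finset.sum_congr rfl fun k _ => h2 k] at h
    rw [h]
    rw [← fromBlocks_one (l := Fin m) (m := Fin r) (α := ℂ)]
    rfl
  -- the trace identity
  have hkey : ∀ Z : Matrix (Fin r) (Fin r) ℂ,
      (∑ k, R k * Z * (R k)ᴴ).trace = Z.trace - ∑ k, (P k * Z * (P k)ᴴ).trace := by
    intro Z
    have h1 : Z.trace = ∑ k, ((P k * Z * (P k)ᴴ).trace + (R k * Z * (R k)ᴴ).trace) := by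
      have h2 : ∀ k : Fin K, (P k * Z * (P k)ᴴ).trace + (R k * Z * (R k)ᴴ).trace
          = ((((P k)ᴴ * P k) + ((R k)ᴴ * R k)) * Z).trace := by
        intro k
        rw [Matrix.add_mul, trace_add, Matrix.trace_mul_cycle (P k) Z ((P k)ᴴ),
          Matrix.trace_mul_cycle (R k) Z ((R k)ᴴ), Matrix.mul_assoc, Matrix.mul_assoc]
      rw [Finset.sum_congr rfl fun k _ => h2 k, ← Matrix.trace_sum]
      rw [← Finset.sum_mul, hTP22, Matrix.one_mul]
    rw [Matrix.trace_sum]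
    rw [h1, Finset.sum_add_distrib]
    ring
  have hmono : ∀ X : Matrix (Fin r) (Fin r) ℂ, X.PosSemidef →
      ((∑ k, R k * X * (R k)ᴴ).trace).re ≤ X.trace.re := by
    intro X hX
    rw [hkey X]
    have : 0 ≤ (∑ k, (P k * X * (P k)ᴴ).trace).re := by
      rw [Complex.re_sum]
      exact Finset.sum_nonneg fun k _ =>
        trace_re_nonneg (hX.mul_mul_conjTranspose_same (P k))
    simp only [Complex.sub_re]
    linarith
  constructor
  · -- GAS → no fixed state
    intro h
    rintro ⟨ρ, hpsd, htr, h11, h12, h21, hPfix, hfix⟩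
    have hiter : ∀ t, (fun σ => ∑ k, M k * σ * (M k)ᴴ)^[t] ρ = ρ :=
      Function.iterate_fixed hfix
    have hconst : (fun t : ℕ =>
        (Matrix.fromBlocks 0 0 0 (1 : Matrix (Fin r) (Fin r) ℂ) *
          ((fun σ => ∑ k, M k * σ * (M k)ᴴ)^[t] ρ)).trace) = fun _ => (1 : ℂ) := by
      funext t
      rw [hiter t, trace_proj]
      have hρtr : ρ.trace = ρ.toBlocks₁₁.trace + ρ.toBlocks₂₂.trace := by
        conv_lhs => rw [← fromBlocks_toBlocks ρ]
        exact trace_fromBlocks _ _ _ _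
      rw [hρtr, h11] at htr
      simpa using htr
    have := h ρ hpsd htr
    rw [hconst] at this
    exact one_ne_zero (tendsto_nhds_unique this tendsto_const_nhds).symm
  · -- no fixed state → GAS
    intro hno ρ hpsd htr
    set X : Matrix (Fin r) (Fin r) ℂ := ρ.toBlocks₂₂ with hXdef
    have hXpsd : X.PosSemidef := hpsd.submatrix Sum.inr
    have h11psd : (ρ.toBlocks₁₁).PosSemidef := hpsd.submatrix Sum.inl
    have hX1 : X.trace.re ≤ 1 := by
      have hρtr : ρ.trace = ρ.toBlocks₁₁.trace + ρ.toBlocks₂₂.trace := by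
        conv_lhs => rw [← fromBlocks_toBlocks ρ]
        exact trace_fromBlocks _ _ _ _
      have h1 := congrArg Complex.re (hρtr.symm.trans htr)
      rw [Complex.add_re, Complex.one_re] at h1
      have h2 := trace_re_nonneg h11psd
      linarith
    -- block dynamics
    have hblock : ∀ σ : Matrix (Fin m ⊕ Fin r) (Fin m ⊕ Fin r) ℂ,
        (∑ k, M k * σ * (M k)ᴴ).toBlocks₂₂ = ∑ k, R k * σ.toBlocks₂₂ * (R k)ᴴ := by
      intro σ
      rw [toBlocks22_sum]
      exact Finset.sum_congr rfl fun k _ => mul_mul_CT_block22 (M k) (hQ k) σ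
    have hiterblock : ∀ t : ℕ,
        ((fun σ => ∑ k, M k * σ * (M k)ᴴ)^[t] ρ).toBlocks₂₂
          = (fun Z => ∑ k, R k * Z * (R k)ᴴ)^[t] X := by
      intro t
      induction t with
      | zero => rfl
      | succ t ih =>
        rw [Function.iterate_succ_apply', Function.iterate_succ_apply', hblock, ih]
    -- psd of Ψ iterates
    have hpsdit : ∀ t : ℕ, ((fun Z => ∑ k, R k * Z * (R k)ᴴ)^[t] X).PosSemidef := by
      intro t
      induction t with
      | zero => simpa using hXpsd
      | succ t ih =>
        rw [Function.iterate_succ_apply']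
        exact posSemidef_sum _ _ fun k _ => ih.mul_mul_conjTranspose_same (R k)
    set b : ℕ → ℝ := fun t => (((fun Z => ∑ k, R k * Z * (R k)ᴴ)^[t] X).trace).re with hbdef
    have hb0 : Tendsto b atTop (nhds 0) := by
      by_contra hnot
      obtain ⟨Y, hYpsd, hYtr, hYfix⟩ := cesaro_fixed R hmono X hXpsd hX1 hnot
      -- derive P k * Y = 0
      have hPtr : ∑ k, (P k * Y * (P k)ᴴ).trace = 0 := by
        have h := hkey Y
        rw [hYfix] at h
        linear_combination h
      have hPY : ∀ k, P k * Y = 0 := by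
        intro k
        have hretr : ∑ k, ((P k * Y * (P k)ᴴ).trace).re = 0 := by
          have := congrArg Complex.re hPtr
          rwa [Complex.re_sum] at this
        have hre0 : ((P k * Y * (P k)ᴴ).trace).re = 0 :=
          (Finset.sum_eq_zero_iff_of_nonneg fun k _ =>
            trace_re_nonneg (hYpsd.mul_mul_conjTranspose_same (P k))).mp hretr k (mem_univ k)
        have htr0 : (P k * Y * (P k)ᴴ).trace = 0 := by
          rw [trace_real (hYpsd.mul_mul_conjTranspose_same (P k)).1, hre0, Complex.ofReal_zero]
        have hzero : P k * Y * (P k)ᴴ = 0 :=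
          eq_zero_of_trace_eq_zero (hYpsd.mul_mul_conjTranspose_same (P k)) htr0
        obtain ⟨C, hC⟩ := posSemidef_iff_eq_transpose_mul_self.mp hYpsd
        have h5 : (C * (P k)ᴴ)ᴴ * (C * (P k)ᴴ) = P k * Y * (P k)ᴴ := by
          rw [conjTranspose_mul, conjTranspose_conjTranspose, hC]
          simp [Matrix.mul_assoc]
        have h6 : C * (P k)ᴴ = 0 := by
          rw [← Matrix.conjTranspose_mul_self_eq_zero (A := C * (P k)ᴴ)]
          rw [h5, hzero]
        have h7 : P k * Cᴴ = (C * (P k)ᴴ)ᴴ := by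
          rw [conjTranspose_mul, conjTranspose_conjTranspose]
        rw [hC, ← Matrix.mul_assoc, h7, h6, conjTranspose_zero, Matrix.zero_mul]
      -- build the fixed full state
      have hterm : ∀ k, M k * fromBlocks 0 0 0 Y * (M k)ᴴ
          = fromBlocks (0 : Matrix (Fin m) (Fin m) ℂ) 0 0 (R k * Y * (R k)ᴴ) := by
        intro k
        have hYPk : Y * ((M k).toBlocks₁₂)ᴴ = 0 := by
          have : (M k).toBlocks₁₂ = P k := rfl
          rw [this]
          calc Y * (P k)ᴴ = Yᴴ * (P k)ᴴ := by rw [hYpsd.1]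
            _ = (P k * Y)ᴴ := (conjTranspose_mul _ _).symm
            _ = 0 := by rw [hPY k, conjTranspose_zero]
        have hPYk : (M k).toBlocks₁₂ * Y = 0 := hPY k
        conv_lhs => rw [← fromBlocks_toBlocks (M k), hQ k]
        rw [fromBlocks_conjTranspose, fromBlocks_multiply, fromBlocks_multiply]
        simp only [Matrix.mul_zero, Matrix.zero_mul, add_zero, zero_add,
          conjTranspose_zero, Matrix.mul_assoc, hYPk]
        rw [← Matrix.mul_assoc ((M k).toBlocks₁₂) Y, hPYk]
        simp [Matrix.mul_assoc]
        rfl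
      have hfixfull : ∑ k, M k * fromBlocks 0 0 0 Y * (M k)ᴴ
          = fromBlocks (0 : Matrix (Fin m) (Fin m) ℂ) 0 0 Y := by
        rw [Finset.sum_congr rfl fun k _ => hterm k, sum_fromBlocks00, hYfix]
      refine hno ⟨fromBlocks 0 0 0 Y, psd_fromBlocks00 hYpsd, ?_, rfl, rfl, rfl, ?_, hfixfull⟩
      · rw [trace_fromBlocks]
        simpa using hYtr
      · intro k
        exact hPY k
    -- conclude
    have hfun : (fun t : ℕ =>
        (Matrix.fromBlocks 0 0 0 (1 : Matrix (Fin r) (Fin r) ℂ) *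
          ((fun σ => ∑ k, M k * σ * (M k)ᴴ)^[t] ρ)).trace)
        = fun t : ℕ => ((b t : ℝ) : ℂ) := by
      funext t
      rw [trace_proj, hiterblock t, trace_real (hpsdit t).1]
    rw [hfun]
    have hfin := (Complex.continuous_ofReal.tendsto 0).comp hb0
    simpa [Function.comp_def] using hfin
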